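/- Let C be an infinitary pretopos and X an object. For A ∈ C/(X × X), let G_X(A) = ∐_{n≥0} (A ⊔ A^op)^{⊗_X n} be the free ⊗_X-monoid on A ⊔ A^op. Then the pair (X, G_X(A)) with the induced structure maps is an internal groupoid-like object satisfying the Kan conditions (composition, inverse), and the coequalizer of the two maps G_X(A) ⇉ X equals the coequalizer of the two maps A ⇉ X. -/

import Mathlib

open CategoryTheory CategoryTheory.Limits

universe v u

variable {C : Type u} [Category.{v} C] [HasFiniteLimits C]

namespace RelTensor

variable (X : C)

/-- The source map of an object of `C/(X × X)`. -/
noncomputable abbrev src (A : Over (X ⨯ X)) : A.left ⟶ X := A.hom ≫ prod.fst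

/-- The target map of an object of `C/(X × X)`. -/
noncomputable abbrev tgt (A : Over (X ⨯ X)) : A.left ⟶ X := A.hom ≫ prod.snd

/-- The composition tensor product `A ⊗_X B = A ×_{d₁, X, d₀} B` on `C/(X × X)`. -/
noncomputable def tens (A B : Over (X ⨯ X)) : Over (X ⨯ X) :=
  Over.mk (prod.lift (pullback.fst (tgt X A) (src X B) ≫ src X A)
    (pullback.snd (tgt X A) (src X B) ≫ tgt X B))

/-- The unit for `⊗_X`: the diagonal `X ⟶ X × X`. -/
noncomputable def unitX : Over (X ⨯ X) := Over.mk (diag X)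

/-- The opposite relation, obtained by swapping the two structure maps. -/
noncomputable def opX : Over (X ⨯ X) ⥤ Over (X ⨯ X) :=
  Over.map (prod.braiding X X).hom

end RelTensor

variable (C)

/-- An equivalence groupoid in `C`: a pair of objects with a monomorphism
`X₁ ⟶ X₀ ⨯ X₀` which is an internal equivalence relation. -/
structure EqGpd where
  X₀ : C
  X₁ : C
  d₀ : X₁ ⟶ X₀
  d₁ : X₁ ⟶ X₀
  mono : Mono (prod.lift d₀ d₁)
  refl : ∀ (T : C) (x : T ⟶ X₀), ∃ h : T ⟶ X₁, h ≫ d₀ = x ∧ h ≫ d₁ = x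
  symm : ∀ (T : C) (x y : T ⟶ X₀), (∃ h : T ⟶ X₁, h ≫ d₀ = x ∧ h ≫ d₁ = y) →
    ∃ h : T ⟶ X₁, h ≫ d₀ = y ∧ h ≫ d₁ = x
  trans : ∀ (T : C) (x y z : T ⟶ X₀),
    (∃ h : T ⟶ X₁, h ≫ d₀ = x ∧ h ≫ d₁ = y) →
    (∃ h : T ⟶ X₁, h ≫ d₀ = y ∧ h ≫ d₁ = z) →
    ∃ h : T ⟶ X₁, h ≫ d₀ = x ∧ h ≫ d₁ = z

namespace EqGpd

variable {C}

/-- A morphism of equivalence groupoids. -/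
@[ext]
structure Hom (A B : EqGpd C) where
  f₀ : A.X₀ ⟶ B.X₀
  f₁ : A.X₁ ⟶ B.X₁
  w₀ : f₁ ≫ B.d₀ = A.d₀ ≫ f₀
  w₁ : f₁ ≫ B.d₁ = A.d₁ ≫ f₀

instance : Category (EqGpd C) where
  Hom A B := Hom A B
  id A := ⟨𝟙 _, 𝟙 _, by simp, by simp⟩
  comp {A B D} f g := ⟨f.f₀ ≫ g.f₀, f.f₁ ≫ g.f₁,
    by rw [Category.assoc, g.w₀, ← Category.assoc, f.w₀, Category.assoc],
    by rw [Category.assoc, g.w₁, ← Category.assoc, f.w₁, Category.assoc]⟩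
  id_comp f := by apply Hom.ext <;> simp
  comp_id f := by apply Hom.ext <;> simp
  assoc f g h := by apply Hom.ext <;> simp

@[simp] lemma comp_f₀ {A B D : EqGpd C} (f : A ⟶ B) (g : B ⟶ D) :
    (f ≫ g).f₀ = f.f₀ ≫ g.f₀ := rfl

@[simp] lemma comp_f₁ {A B D : EqGpd C} (f : A ⟶ B) (g : B ⟶ D) :
    (f ≫ g).f₁ = f.f₁ ≫ g.f₁ := rfl

@[simp] lemma id_f₀ (A : EqGpd C) : (𝟙 A : A ⟶ A).f₀ = 𝟙 A.X₀ := rfl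

@[simp] lemma id_f₁ (A : EqGpd C) : (𝟙 A : A ⟶ A).f₁ = 𝟙 A.X₁ := rfl

/-- The homotopy relation on morphisms of equivalence groupoids. -/
def htpy : HomRel (EqGpd C) := fun {A B} f g =>
  ∃ h : A.X₀ ⟶ B.X₁, h ≫ B.d₀ = f.f₀ ∧ h ≫ B.d₁ = g.f₀

/-- The embedding of `C` into equivalence groupoids via diagonals. -/
def disc : C ⥤ EqGpd C where
  obj X :=
    { X₀ := X
      X₁ := X
      d₀ := 𝟙 X
      d₁ := 𝟙 X
      mono := ⟨fun {Z} g h w => by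
        have := congrArg (fun t => t ≫ (prod.fst : X ⨯ X ⟶ X)) w
        simp only [Category.assoc] at this
        erw [prod.lift_fst] at this
        simpa using this⟩
      refl := fun T x => ⟨x, by simp, by simp⟩
      symm := fun T x y ⟨h, h0, h1⟩ => ⟨h, by simpa using h1, by simpa using h0⟩
      trans := fun T x y z ⟨h, h0, h1⟩ ⟨k, k0, k1⟩ =>
        ⟨h, h0, by
          simp only [Category.comp_id] at h0 h1 k0 k1 ⊢
          rw [h1, ← k0]; exact k1⟩ }
  map {X Y} u := ⟨u, u, by simp, by simp⟩
  map_id X := by apply Hom.ext <;> simp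
  map_comp f g := by apply Hom.ext <;> simp

end EqGpd

variable {C}

/-- `f` is an effective epimorphism: it is the coequalizer of its kernel pair. -/
def IsEffectiveEpi {X Y : C} (f : X ⟶ Y) : Prop :=
  ∃ w : pullback.fst f f ≫ f = pullback.snd f f ≫ f,
    Nonempty (IsColimit (Cofork.ofπ f w))

namespace RelTensor

variable (X : C) [HasBinaryCoproducts C] [∀ J : Type v, HasColimitsOfShape (Discrete J) C]

/-- `A ⊔ A^op` in `C/(X × X)`. -/
noncomputable def zig (A : Over (X ⨯ X)) : Over (X ⨯ X) :=
  Over.mk (coprod.desc A.hom ((opX X).obj A).hom)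

/-- Iterated tensor power for `⊗_X`. -/
noncomputable def pow (A : Over (X ⨯ X)) : ℕ → Over (X ⨯ X)
  | 0 => unitX X
  | n + 1 => tens X A (pow A n)

/-- The free `⊗_X`-monoid `G_X(A) = ∐ₙ (A ⊔ A^op)^{⊗_X n}` on `A ⊔ A^op`. -/
noncomputable def GXobj (A : Over (X ⨯ X)) : Over (X ⨯ X) :=
  Over.mk (Sigma.desc fun n : ULift.{v} ℕ => (pow X (zig X A) n.down).hom)

end RelTensor

open RelTensor

/-- The December 2024 Mathlib notion `CategoryTheory.Limits.CoproductDisjoint` (binary),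
restated verbatim since Mathlib has replaced it by a different notion. -/
class OldCoproductDisjoint {C : Type u} [Category.{v} C] (X₁ X₂ : C) where
  isInitialOfIsPullbackOfIsCoproduct :
    ∀ {X Z} {pX₁ : X₁ ⟶ X} {pX₂ : X₂ ⟶ X} {f : Z ⟶ X₁} {g : Z ⟶ X₂}
      (_ : IsColimit (BinaryCofan.mk pX₁ pX₂)) (comm : f ≫ pX₁ = g ≫ pX₂),
      IsLimit (PullbackCone.mk _ _ comm) → IsInitial Z
  isInitialOfIsPullbackOfCoproduct :
    ∀ {Z} {f : Z ⟶ X₁} {g : Z ⟶ X₂} [HasBinaryCoproduct X₁ X₂]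
      (comm : f ≫ coprod.inl = g ≫ coprod.inr),
      IsLimit (PullbackCone.mk _ _ comm) → IsInitial Z :=
    fun comm => isInitialOfIsPullbackOfIsCoproduct (coprodIsCoprod _ _) comm
  mono_inl : ∀ (X) (X₁ : X₁ ⟶ X) (X₂ : X₂ ⟶ X) (_ : IsColimit (BinaryCofan.mk X₁ X₂)), Mono X₁
  mono_inr : ∀ (X) (X₁ : X₁ ⟶ X) (X₂ : X₂ ⟶ X) (_ : IsColimit (BinaryCofan.mk X₁ X₂)), Mono X₂

/-- The December 2024 Mathlib notion `CategoryTheory.Limits.CoproductsDisjoint`. -/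
class CoproductsDisjoint (C : Type u) [Category.{v} C] where
  CoproductDisjoint : ∀ X Y : C, OldCoproductDisjoint X Y

attribute [local simp] prod.lift_fst prod.lift_snd coprod.inl_desc coprod.inr_desc prod.lift_fst_assoc prod.lift_snd_assoc coprod.inl_desc_assoc coprod.inr_desc_assoc pullback.lift_fst pullback.lift_snd pullback.lift_fst_assoc pullback.lift_snd_assoc

namespace GXAux

open RelTensor

variable {C : Type u} [Category.{v} C] [HasFiniteLimits C]

section Basic

variable (X : C) (Z : Over (X ⨯ X))

@[simp] lemma src_unitX : src X (unitX X) = 𝟙 X := by simp [unitX, src]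

@[simp] lemma tgt_unitX : tgt X (unitX X) = 𝟙 X := by simp [unitX, tgt]

@[simp] lemma src_tens (A B : Over (X ⨯ X)) :
    src X (tens X A B) = pullback.fst (tgt X A) (src X B) ≫ src X A := by
  simp [tens, src]

@[simp] lemma tgt_tens (A B : Over (X ⨯ X)) :
    tgt X (tens X A B) = pullback.snd (tgt X A) (src X B) ≫ tgt X B := by
  simp [tens, tgt]

@[simp] lemma src_pow_zero : src X (pow X Z 0) = 𝟙 X := src_unitX X

@[simp] lemma tgt_pow_zero : tgt X (pow X Z 0) = 𝟙 X := tgt_unitX X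

@[simp] lemma src_pow_succ (n : ℕ) :
    src X (pow X Z (n + 1)) = pullback.fst (tgt X Z) (src X (pow X Z n)) ≫ src X Z :=
  src_tens X Z (pow X Z n)

@[simp] lemma tgt_pow_succ (n : ℕ) :
    tgt X (pow X Z (n + 1)) =
      pullback.snd (tgt X Z) (src X (pow X Z n)) ≫ tgt X (pow X Z n) :=
  tgt_tens X Z (pow X Z n)

end Basic

section Zig

variable [HasBinaryCoproducts C]

variable (X : C) (A : Over (X ⨯ X))

@[simp] lemma inl_src_zig : coprod.inl ≫ src X (zig X A) = src X A := by
  simp [zig, src]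

@[simp] lemma inl_tgt_zig : coprod.inl ≫ tgt X (zig X A) = tgt X A := by
  simp [zig, tgt]

@[simp] lemma inr_src_zig : (coprod.inr : ((opX X).obj A).left ⟶ _) ≫ src X (zig X A) = tgt X A := by
  simp [zig, opX, src, tgt]
  erw [coprod.inr_desc_assoc]
  simp

@[simp] lemma inr_tgt_zig : (coprod.inr : ((opX X).obj A).left ⟶ _) ≫ tgt X (zig X A) = src X A := by
  simp [zig, opX, src, tgt]
  erw [coprod.inr_desc_assoc]
  simp

/-- The swap map on `A ⊔ A^op`. -/
noncomputable def ozig : (zig X A).left ⟶ (zig X A).left :=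
  coprod.desc (coprod.inr : ((opX X).obj A).left ⟶ A.left ⨿ ((opX X).obj A).left)
    (coprod.inl : A.left ⟶ A.left ⨿ ((opX X).obj A).left)

lemma ozig_src : ozig X A ≫ src X (zig X A) = tgt X (zig X A) := by
  apply coprod.hom_ext
  · erw [← Category.assoc]; simp only [ozig]; erw [coprod.inl_desc]
    erw [inr_src_zig, inl_tgt_zig]
  · erw [← Category.assoc]; simp only [ozig]; erw [coprod.inr_desc]
    erw [inl_src_zig, inr_tgt_zig]

lemma ozig_tgt : ozig X A ≫ tgt X (zig X A) = src X (zig X A) := by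
  apply coprod.hom_ext
  · erw [← Category.assoc]; simp only [ozig]; erw [coprod.inl_desc]
    erw [inr_tgt_zig, inl_src_zig]
  · erw [← Category.assoc]; simp only [ozig]; erw [coprod.inr_desc]
    erw [inl_tgt_zig, inr_src_zig]

end Zig
section Words

variable (X : C) (Z : Over (X ⨯ X))

lemma comp_src_tens (A B : Over (X ⨯ X)) {W : C} (a : W ⟶ (tens X A B).left) :
    a ≫ src X (tens X A B) = (a ≫ pullback.fst (tgt X A) (src X B)) ≫ src X A := by
  erw [src_tens, Category.assoc]
  rfl

lemma comp_tgt_tens (A B : Over (X ⨯ X)) {W : C} (a : W ⟶ (tens X A B).left) :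
    a ≫ tgt X (tens X A B) = (a ≫ pullback.snd (tgt X A) (src X B)) ≫ tgt X B := by
  erw [tgt_tens, Category.assoc]
  rfl

/-- Concatenation of tensor words, with its source/target compatibilities. -/
noncomputable def concatAux :
    ∀ m n : ℕ,
      { f : pullback (tgt X (pow X Z m)) (src X (pow X Z n)) ⟶ (pow X Z (n + m)).left //
        f ≫ src X (pow X Z (n + m)) = pullback.fst _ _ ≫ src X (pow X Z m) ∧
        f ≫ tgt X (pow X Z (n + m)) = pullback.snd _ _ ≫ tgt X (pow X Z n) }
  | 0, n =>
    ⟨pullback.snd _ _, by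
      have h := pullback.condition (f := tgt X (pow X Z 0)) (g := src X (pow X Z n))
      simp only [tgt_pow_zero, Category.comp_id] at h
      simp [← h], by simp⟩
  | m + 1, n => by
    obtain ⟨c, hc1, hc2⟩ := concatAux (m := m) (n := n)
    have hcond : (pullback.fst (tgt X (pow X Z (m + 1))) (src X (pow X Z n)) ≫
        pullback.snd (tgt X Z) (src X (pow X Z m))) ≫ tgt X (pow X Z m) =
        pullback.snd (tgt X (pow X Z (m + 1))) (src X (pow X Z n)) ≫ src X (pow X Z n) := by
      erw [Category.assoc, ← tgt_pow_succ X Z m]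
      exact pullback.condition
    have hcond2 : (pullback.fst (tgt X (pow X Z (m + 1))) (src X (pow X Z n)) ≫
        pullback.fst (tgt X Z) (src X (pow X Z m))) ≫ tgt X Z =
        (pullback.lift _ _ hcond ≫ c) ≫ src X (pow X Z (n + m)) := by
      erw [Category.assoc, Category.assoc, hc1, pullback.condition,
        pullback.lift_fst_assoc, Category.assoc]
      rfl
    refine ⟨pullback.lift (pullback.fst _ _ ≫ pullback.fst (tgt X Z) (src X (pow X Z m)))
      (pullback.lift _ _ hcond ≫ c) hcond2, ?_, ?_⟩
    · refine (comp_src_tens X Z (pow X Z (n + m)) _).trans ?_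
      erw [pullback.lift_fst]
      erw [src_pow_succ X Z m, Category.assoc]
      rfl
    · refine (comp_tgt_tens X Z (pow X Z (n + m)) _).trans ?_
      erw [pullback.lift_snd]
      rw [Category.assoc, hc2, pullback.lift_snd_assoc]

/-- Appending a single letter at the end of a word. -/
noncomputable def snocAux :
    ∀ n : ℕ,
      { f : pullback (tgt X (pow X Z n)) (src X Z) ⟶ (pow X Z (n + 1)).left //
        f ≫ src X (pow X Z (n + 1)) = pullback.fst _ _ ≫ src X (pow X Z n) ∧
        f ≫ tgt X (pow X Z (n + 1)) = pullback.snd _ _ ≫ tgt X Z }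
  | 0 => by
    have hcond : pullback.snd (tgt X (pow X Z 0)) (src X Z) ≫ tgt X Z =
        (pullback.snd (tgt X (pow X Z 0)) (src X Z) ≫ tgt X Z) ≫ src X (pow X Z 0) := by
      rw [src_pow_zero, Category.comp_id]
    refine ⟨pullback.lift (pullback.snd _ _) (pullback.snd _ _ ≫ tgt X Z) hcond, ?_, ?_⟩
    · have h := pullback.condition (f := tgt X (pow X Z 0)) (g := src X Z)
      simp only [tgt_pow_zero, Category.comp_id] at h
      refine (comp_src_tens X Z (pow X Z 0) _).trans ?_
      erw [pullback.lift_fst]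
      rw [src_pow_zero]
      exact h.symm
    · refine (comp_tgt_tens X Z (pow X Z 0) _).trans ?_
      erw [pullback.lift_snd]
      simp only [tgt_pow_zero]
      erw [Category.comp_id]
      rfl
  | n + 1 => by
    obtain ⟨c, hc1, hc2⟩ := snocAux (n := n)
    have hcond : (pullback.fst (tgt X (pow X Z (n + 1))) (src X Z) ≫
        pullback.snd (tgt X Z) (src X (pow X Z n))) ≫ tgt X (pow X Z n) =
        pullback.snd (tgt X (pow X Z (n + 1))) (src X Z) ≫ src X Z := by
      erw [Category.assoc, ← tgt_pow_succ X Z n]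
      exact pullback.condition
    have hcond2 : (pullback.fst (tgt X (pow X Z (n + 1))) (src X Z) ≫
        pullback.fst (tgt X Z) (src X (pow X Z n))) ≫ tgt X Z =
        (pullback.lift _ _ hcond ≫ c) ≫ src X (pow X Z (n + 1)) := by
      erw [Category.assoc, Category.assoc, hc1, pullback.condition,
        pullback.lift_fst_assoc, Category.assoc]
      rfl
    refine ⟨pullback.lift (pullback.fst _ _ ≫ pullback.fst (tgt X Z) (src X (pow X Z n)))
      (pullback.lift _ _ hcond ≫ c) hcond2, ?_, ?_⟩
    · refine (comp_src_tens X Z (pow X Z (n + 1)) _).trans ?_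
      erw [pullback.lift_fst]
      erw [src_pow_succ X Z n, Category.assoc]
      rfl
    · refine (comp_tgt_tens X Z (pow X Z (n + 1)) _).trans ?_
      erw [pullback.lift_snd]
      rw [Category.assoc, hc2, pullback.lift_snd_assoc]

/-- Reversal of a tensor word, given a swap `o` on the letters. -/
noncomputable def revAux (o : Z.left ⟶ Z.left) (ho1 : o ≫ src X Z = tgt X Z)
    (ho2 : o ≫ tgt X Z = src X Z) :
    ∀ n : ℕ,
      { f : (pow X Z n).left ⟶ (pow X Z n).left //
        f ≫ src X (pow X Z n) = tgt X (pow X Z n) ∧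
        f ≫ tgt X (pow X Z n) = src X (pow X Z n) }
  | 0 => ⟨𝟙 _, by simp; exact Category.id_comp _, by simp; exact Category.id_comp _⟩
  | n + 1 => by
    obtain ⟨r, hr1, hr2⟩ := revAux o ho1 ho2 n
    have hcond : (pullback.snd (tgt X Z) (src X (pow X Z n)) ≫ r) ≫ tgt X (pow X Z n) =
        (pullback.fst (tgt X Z) (src X (pow X Z n)) ≫ o) ≫ src X Z := by
      rw [Category.assoc, hr2, Category.assoc, ho1, pullback.condition]
    obtain ⟨c, hc1, hc2⟩ := snocAux X Z n
    refine ⟨pullback.lift _ _ hcond ≫ c, ?_, ?_⟩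
    · erw [Category.assoc, hc1, pullback.lift_fst_assoc, Category.assoc, hr1,
        tgt_pow_succ X Z n]
      rfl
    · erw [Category.assoc, hc2, pullback.lift_snd_assoc, Category.assoc, ho2,
        src_pow_succ X Z n]
      rfl


/-- Coequalizing `Z ⇉ X` coequalizes every tensor power. -/
lemma pow_coeq {T : C} (q : X ⟶ T) (hZ : src X Z ≫ q = tgt X Z ≫ q) :
    ∀ n : ℕ, src X (pow X Z n) ≫ q = tgt X (pow X Z n) ≫ q
  | 0 => by simp
  | n + 1 => by
    have ih := pow_coeq q hZ n
    erw [src_pow_succ X Z n, tgt_pow_succ X Z n, Category.assoc, hZ,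
      pullback.condition_assoc, ih, Category.assoc]
    simp only [RelTensor.src, RelTensor.tgt, Category.assoc]
    erw [Category.assoc, Category.assoc]
    rfl

end Words
section Universality

variable {J : Type v} [HasColimitsOfShape (Discrete J) C]

/-- Pullback of a coproduct along the first leg decomposes as a coproduct. -/
theorem pbLeft (f : J → C) {Y Xo : C} (h : (∐ f) ⟶ Xo) (g : Y ⟶ Xo)
    (t : ∀ j, f j ⟶ Xo) (ht : ∀ j, Sigma.ι f j ≫ h = t j)
    (huniv : ∀ {J' : Type v} (F : Discrete J' ⥤ C) (c : Cocone F),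
      IsColimit c → IsUniversalColimit c) :
    Nonempty (IsColimit (Cofan.mk (pullback h g)
      (fun j => pullback.map (t j) g h g (Sigma.ι f j) (𝟙 Y) (𝟙 Xo)
        (by rw [Category.comp_id]; exact (ht j).symm)
        (by rw [Category.comp_id, Category.id_comp])))) := by
  refine huniv (Discrete.functor f) (Cofan.mk (∐ f) (Sigma.ι f)) (coproductIsCoproduct f)
    (F' := Discrete.functor fun j => pullback (t j) g)
    (Cofan.mk (pullback h g)
      (fun j => pullback.map (t j) g h g (Sigma.ι f j) (𝟙 Y) (𝟙 Xo)
        (by rw [Category.comp_id]; exact (ht j).symm)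
        (by rw [Category.comp_id, Category.id_comp])))
    (Discrete.natTrans fun j => pullback.fst (t j.as) g)
    (pullback.fst h g) ?_ (NatTrans.equifibered_of_discrete _) ?_
  · ext ⟨j⟩
    simp [pullback.map]
  · rintro ⟨j⟩
    simp only [Cofan.mk_ι_app, Discrete.natTrans_app]
    refine IsPullback.of_right ?_ (by simp [pullback.map]) ((IsPullback.of_hasPullback h g).flip)
    have e : (pullback.map (t j) g h g (Sigma.ι f j) (𝟙 Y) (𝟙 Xo)
        (by rw [Category.comp_id]; exact (ht j).symm)
        (by rw [Category.comp_id, Category.id_comp])) ≫ pullback.snd h g =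
        pullback.snd (t j) g := by simp [pullback.map]
    rw [e]
    show IsPullback _ _ _ (Sigma.ι f j ≫ h)
    rw [ht j]
    exact (IsPullback.of_hasPullback (t j) g).flip

/-- Pullback of a coproduct along the second leg decomposes as a coproduct. -/
theorem pbRight (f : J → C) {Y Xo : C} (h : (∐ f) ⟶ Xo) (g : Y ⟶ Xo)
    (t : ∀ j, f j ⟶ Xo) (ht : ∀ j, Sigma.ι f j ≫ h = t j)
    (huniv : ∀ {J' : Type v} (F : Discrete J' ⥤ C) (c : Cocone F),
      IsColimit c → IsUniversalColimit c) :
    Nonempty (IsColimit (Cofan.mk (pullback g h)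
      (fun j => pullback.map g (t j) g h (𝟙 Y) (Sigma.ι f j) (𝟙 Xo)
        (by rw [Category.comp_id, Category.id_comp])
        (by rw [Category.comp_id]; exact (ht j).symm)))) := by
  refine huniv (Discrete.functor f) (Cofan.mk (∐ f) (Sigma.ι f)) (coproductIsCoproduct f)
    (F' := Discrete.functor fun j => pullback g (t j))
    (Cofan.mk (pullback g h)
      (fun j => pullback.map g (t j) g h (𝟙 Y) (Sigma.ι f j) (𝟙 Xo)
        (by rw [Category.comp_id, Category.id_comp])
        (by rw [Category.comp_id]; exact (ht j).symm)))
    (Discrete.natTrans fun j => pullback.snd g (t j.as))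
    (pullback.snd g h) ?_ (NatTrans.equifibered_of_discrete _) ?_
  · ext ⟨j⟩
    simp [pullback.map]
  · rintro ⟨j⟩
    simp only [Cofan.mk_ι_app, Discrete.natTrans_app]
    refine IsPullback.of_right ?_ (by simp [pullback.map]) (IsPullback.of_hasPullback g h)
    have e : (pullback.map g (t j) g h (𝟙 Y) (Sigma.ι f j) (𝟙 Xo)
        (by rw [Category.comp_id, Category.id_comp])
        (by rw [Category.comp_id]; exact (ht j).symm)) ≫ pullback.fst g h =
        pullback.fst g (t j) := by simp [pullback.map]
    rw [e]
    show IsPullback _ _ _ (Sigma.ι f j ≫ h)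
    rw [ht j]
    exact IsPullback.of_hasPullback g (t j)

end Universality
section Iota

variable [∀ J : Type v, HasColimitsOfShape (Discrete J) C] [HasBinaryCoproducts C]
variable (X : C) (A : Over (X ⨯ X))

lemma iota_src (n : ULift.{v} ℕ) :
    (Sigma.ι (fun k : ULift.{v} ℕ => (pow X (zig X A) k.down).left) n :
      _ ⟶ (GXobj X A).left) ≫ src X (GXobj X A) = src X (pow X (zig X A) n.down) := by
  show _ ≫ (GXobj X A).hom ≫ prod.fst = _
  erw [← Category.assoc]
  erw [Sigma.ι_desc]

lemma iota_tgt (n : ULift.{v} ℕ) :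
    (Sigma.ι (fun k : ULift.{v} ℕ => (pow X (zig X A) k.down).left) n :
      _ ⟶ (GXobj X A).left) ≫ tgt X (GXobj X A) = tgt X (pow X (zig X A) n.down) := by
  show _ ≫ (GXobj X A).hom ≫ prod.snd = _
  erw [← Category.assoc]
  erw [Sigma.ι_desc]

end Iota
section Cofan

lemma cofanDesc {J : Type v} {f : J → C} {P : C} {κ : ∀ j, f j ⟶ P}
    (hc : IsColimit (Cofan.mk P κ)) {Q : C} (u : ∀ j, f j ⟶ Q) :
    ∃ d : P ⟶ Q, ∀ j, κ j ≫ d = u j :=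
  ⟨hc.desc (Cofan.mk Q u), fun j => by simpa using hc.fac (Cofan.mk Q u) ⟨j⟩⟩

lemma cofanExt {J : Type v} {f : J → C} {P : C} {κ : ∀ j, f j ⟶ P}
    (hc : IsColimit (Cofan.mk P κ)) {Q : C} {a b : P ⟶ Q}
    (w : ∀ j, κ j ≫ a = κ j ≫ b) : a = b :=
  hc.hom_ext fun ⟨j⟩ => by simpa using w j

end Cofan
end GXAux

/-- for an infinitary pretopos `C` and `A ∈ C/(X × X)`, the pair
`(X, G_X(A))` is an internal groupoid-like object satisfying the Kan conditions
(unit, composition and inverse), and a morphism `q : X ⟶ T` coequalizes the two maps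
`G_X(A) ⇉ X` iff it coequalizes the two maps `A ⇉ X`; hence the two coequalizers
coincide. -/
theorem GX_groupoid_and_coequalizer
    [∀ J : Type v, HasColimitsOfShape (Discrete J) C] [HasBinaryCoproducts C]
    (hdisj : Nonempty (CoproductsDisjoint C))
    (huniv : ∀ {J : Type v} (F : Discrete J ⥤ C) (c : Cocone F),
      IsColimit c → IsUniversalColimit c)
    (heff : ∀ A : EqGpd C, ∃ (Q : C) (q : A.X₀ ⟶ Q) (w : A.d₀ ≫ q = A.d₁ ≫ q),
      Nonempty (IsColimit (Cofork.ofπ q w)) ∧ IsIso (pullback.lift A.d₀ A.d₁ w))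
    (hstab : ∀ {X Y Z : C} (f : X ⟶ Y) (g : Z ⟶ Y),
      IsEffectiveEpi f → IsEffectiveEpi (pullback.snd f g))
    (X : C) (A : Over (X ⨯ X)) :
    (∃ σ : X ⟶ (GXobj X A).left,
      σ ≫ src X (GXobj X A) = 𝟙 X ∧ σ ≫ tgt X (GXobj X A) = 𝟙 X) ∧
    (∃ m : pullback (tgt X (GXobj X A)) (src X (GXobj X A)) ⟶ (GXobj X A).left,
      m ≫ src X (GXobj X A) =
        pullback.fst (tgt X (GXobj X A)) (src X (GXobj X A)) ≫ src X (GXobj X A) ∧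
      m ≫ tgt X (GXobj X A) =
        pullback.snd (tgt X (GXobj X A)) (src X (GXobj X A)) ≫ tgt X (GXobj X A)) ∧
    (∃ s : (GXobj X A).left ⟶ (GXobj X A).left,
      s ≫ src X (GXobj X A) = tgt X (GXobj X A) ∧
      s ≫ tgt X (GXobj X A) = src X (GXobj X A)) ∧
    (∀ {T : C} (q : X ⟶ T),
      src X A ≫ q = tgt X A ≫ q ↔
        src X (GXobj X A) ≫ q = tgt X (GXobj X A) ≫ q) := by
  classical
  refine ⟨?_, ?_, ?_, ?_⟩
  · -- unit
    refine ⟨(Sigma.ι (fun k : ULift.{v} ℕ => (pow X (zig X A) k.down).left) ⟨0⟩ :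
        (pow X (zig X A) 0).left ⟶ (GXobj X A).left), ?_, ?_⟩
    · exact (GXAux.iota_src X A ⟨0⟩).trans (GXAux.src_pow_zero X (zig X A))
    · exact (GXAux.iota_tgt X A ⟨0⟩).trans (GXAux.tgt_pow_zero X (zig X A))
  · -- composition
    obtain ⟨outer⟩ := GXAux.pbLeft (fun k : ULift.{v} ℕ => (pow X (zig X A) k.down).left)
      (tgt X (GXobj X A)) (src X (GXobj X A))
      (fun k => tgt X (pow X (zig X A) k.down)) (GXAux.iota_tgt X A) huniv
    have inner := fun n : ULift.{v} ℕ =>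
      (GXAux.pbRight (fun k : ULift.{v} ℕ => (pow X (zig X A) k.down).left)
        (src X (GXobj X A)) (tgt X (pow X (zig X A) n.down))
        (fun k => src X (pow X (zig X A) k.down)) (GXAux.iota_src X A) huniv).some
    have hun : ∀ n : ULift.{v} ℕ,
        ∃ un : pullback (tgt X (pow X (zig X A) n.down)) (src X (GXobj X A)) ⟶
            (GXobj X A).left,
          un ≫ src X (GXobj X A) =
            pullback.fst (tgt X (pow X (zig X A) n.down)) (src X (GXobj X A)) ≫
              src X (pow X (zig X A) n.down) ∧
          un ≫ tgt X (GXobj X A) =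
            pullback.snd (tgt X (pow X (zig X A) n.down)) (src X (GXobj X A)) ≫
              tgt X (GXobj X A) := by
      intro n
      obtain ⟨un, hfac⟩ := GXAux.cofanDesc (inner n)
        (fun k => (GXAux.concatAux X (zig X A) n.down k.down).1 ≫
          (Sigma.ι (fun j : ULift.{v} ℕ => (pow X (zig X A) j.down).left) ⟨k.down + n.down⟩ :
            _ ⟶ (GXobj X A).left))
      refine ⟨un, ?_, ?_⟩
      · refine GXAux.cofanExt (inner n) fun k => ?_
        refine ((Category.assoc _ _ _).symm.trans ?_).trans (Category.assoc _ _ _)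
        erw [hfac k, pullback.lift_fst, Category.comp_id, Category.assoc]
        erw [GXAux.iota_src X A ⟨k.down + n.down⟩]
        rw [(GXAux.concatAux X (zig X A) n.down k.down).2.1]
      · refine GXAux.cofanExt (inner n) fun k => ?_
        refine ((Category.assoc _ _ _).symm.trans ?_).trans (Category.assoc _ _ _)
        erw [hfac k, pullback.lift_snd, Category.assoc, Category.assoc]
        erw [GXAux.iota_tgt X A ⟨k.down + n.down⟩, GXAux.iota_tgt X A k]
        rw [(GXAux.concatAux X (zig X A) n.down k.down).2.2]
    obtain ⟨mm, hmm⟩ := GXAux.cofanDesc outer (fun n => (hun n).choose)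
    refine ⟨mm, ?_, ?_⟩
    · refine GXAux.cofanExt outer fun n => ?_
      refine ((Category.assoc _ _ _).symm.trans ?_).trans (Category.assoc _ _ _)
      erw [hmm n, pullback.lift_fst, (hun n).choose_spec.1, Category.assoc]
      erw [GXAux.iota_src X A n]
    · refine GXAux.cofanExt outer fun n => ?_
      refine ((Category.assoc _ _ _).symm.trans ?_).trans (Category.assoc _ _ _)
      erw [hmm n, pullback.lift_snd, Category.comp_id, (hun n).choose_spec.2]
  · -- inverse
    refine ⟨(Sigma.desc (fun n : ULift.{v} ℕ =>
        (GXAux.revAux X (zig X A) (GXAux.ozig X A) (GXAux.ozig_src X A)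
          (GXAux.ozig_tgt X A) n.down).1 ≫
        Sigma.ι (fun k : ULift.{v} ℕ => (pow X (zig X A) k.down).left) n) :
        (GXobj X A).left ⟶ (GXobj X A).left), ?_, ?_⟩
    · refine Sigma.hom_ext _ _ fun n => ?_
      erw [← Category.assoc]
      erw [Sigma.ι_desc]
      erw [Category.assoc]
      erw [GXAux.iota_src X A n, GXAux.iota_tgt X A n]
      exact (GXAux.revAux X (zig X A) (GXAux.ozig X A) (GXAux.ozig_src X A)
        (GXAux.ozig_tgt X A) n.down).2.1
    · refine Sigma.hom_ext _ _ fun n => ?_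
      erw [← Category.assoc]
      erw [Sigma.ι_desc]
      erw [Category.assoc]
      erw [GXAux.iota_tgt X A n, GXAux.iota_src X A n]
      exact (GXAux.revAux X (zig X A) (GXAux.ozig X A) (GXAux.ozig_src X A)
        (GXAux.ozig_tgt X A) n.down).2.2
  · -- coequalizers agree
    intro T q
    constructor
    · intro hA
      have hzig : src X (zig X A) ≫ q = tgt X (zig X A) ≫ q := by
        apply coprod.hom_ext
        · calc coprod.inl ≫ src X (zig X A) ≫ q
              = (coprod.inl ≫ src X (zig X A)) ≫ q := (Category.assoc _ _ _).symm
            _ = src X A ≫ q := by rw [GXAux.inl_src_zig]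
            _ = tgt X A ≫ q := hA
            _ = (coprod.inl ≫ tgt X (zig X A)) ≫ q := by rw [GXAux.inl_tgt_zig]
            _ = coprod.inl ≫ tgt X (zig X A) ≫ q := Category.assoc _ _ _
        · calc coprod.inr ≫ src X (zig X A) ≫ q
              = (coprod.inr ≫ src X (zig X A)) ≫ q := (Category.assoc _ _ _).symm
            _ = (tgt X A ≫ q : ((opX X).obj A).left ⟶ T) := by rw [GXAux.inr_src_zig]
            _ = (src X A ≫ q : ((opX X).obj A).left ⟶ T) := hA.symm
            _ = (coprod.inr ≫ tgt X (zig X A)) ≫ q := by rw [GXAux.inr_tgt_zig]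
            _ = coprod.inr ≫ tgt X (zig X A) ≫ q := Category.assoc _ _ _
      refine Sigma.hom_ext _ _ fun n => ?_
      refine ((Category.assoc _ _ _).symm.trans ?_).trans (Category.assoc _ _ _)
      erw [GXAux.iota_src X A n, GXAux.iota_tgt X A n]
      exact GXAux.pow_coeq X (zig X A) q hzig n.down
    · intro hG
      have w : 𝟙 (zig X A).left ≫ tgt X (zig X A) =
          tgt X (zig X A) ≫ src X (pow X (zig X A) 0) := by
        rw [Category.id_comp, GXAux.src_pow_zero, Category.comp_id]
      set L : (zig X A).left ⟶ pullback (tgt X (zig X A)) (src X (pow X (zig X A) 0)) :=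
        pullback.lift (𝟙 _) (tgt X (zig X A)) w with hL
      have hk1 : L ≫ src X (pow X (zig X A) 1) = src X (zig X A) := by
        refine (GXAux.comp_src_tens X (zig X A) (pow X (zig X A) 0) _).trans ?_
        erw [hL, pullback.lift_fst, Category.id_comp]
      have hk2 : L ≫ tgt X (pow X (zig X A) 1) = tgt X (zig X A) := by
        refine (GXAux.comp_tgt_tens X (zig X A) (pow X (zig X A) 0) _).trans ?_
        erw [hL, pullback.lift_snd]
        simp only [GXAux.tgt_pow_zero]
        erw [Category.comp_id]
      have e1 : (L ≫ Sigma.ι (fun k : ULift.{v} ℕ => (pow X (zig X A) k.down).left) ⟨1⟩) ≫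
          src X (GXobj X A) = src X (zig X A) := by
        erw [Category.assoc]
        erw [GXAux.iota_src X A ⟨1⟩]
        exact hk1
      have e2 : (L ≫ Sigma.ι (fun k : ULift.{v} ℕ => (pow X (zig X A) k.down).left) ⟨1⟩) ≫
          tgt X (GXobj X A) = tgt X (zig X A) := by
        erw [Category.assoc]
        erw [GXAux.iota_tgt X A ⟨1⟩]
        exact hk2
      have hzig : src X (zig X A) ≫ q = tgt X (zig X A) ≫ q := by
        calc src X (zig X A) ≫ q
            = ((L ≫ Sigma.ι (fun k : ULift.{v} ℕ => (pow X (zig X A) k.down).left) ⟨1⟩) ≫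
                src X (GXobj X A)) ≫ q := by rw [e1]
          _ = (L ≫ Sigma.ι (fun k : ULift.{v} ℕ => (pow X (zig X A) k.down).left) ⟨1⟩) ≫
                src X (GXobj X A) ≫ q := Category.assoc _ _ _
          _ = (L ≫ Sigma.ι (fun k : ULift.{v} ℕ => (pow X (zig X A) k.down).left) ⟨1⟩) ≫
                tgt X (GXobj X A) ≫ q := by erw [hG]; rfl
          _ = ((L ≫ Sigma.ι (fun k : ULift.{v} ℕ => (pow X (zig X A) k.down).left) ⟨1⟩) ≫
                tgt X (GXobj X A)) ≫ q := (Category.assoc _ _ _).symm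
          _ = tgt X (zig X A) ≫ q := by rw [e2]
      calc src X A ≫ q
          = (coprod.inl ≫ src X (zig X A)) ≫ q := by rw [GXAux.inl_src_zig]
        _ = coprod.inl ≫ src X (zig X A) ≫ q := Category.assoc _ _ _
        _ = coprod.inl ≫ tgt X (zig X A) ≫ q := by erw [hzig]; rfl
        _ = (coprod.inl ≫ tgt X (zig X A)) ≫ q := (Category.assoc _ _ _).symm
        _ = tgt X A ≫ q := by rw [GXAux.inl_tgt_zig]
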